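/- Let d ≥ 1 and k ≥ 2 be integers, let B be a d×d complex matrix with Im(Tr B) > 0, and let Q be a d×d matrix over ℂ[X] with every entry of degree at most k − 2. Define M = X^k·I − X^{k−1}·B + Q as a d×d matrix over ℂ[X]. Then the polynomial det M has at least one complex root z with Im z > 0. -/

import Mathlib

open Polynomial

/-- Global Vieta existence: if `Im(Tr B) > 0`, the determinant of the matrix
polynomial `M = X^k • I - X^{k-1} • B + Q` (with `deg Q_{ij} ≤ k - 2`) has at
least one root in the open upper half-plane. -/
theorem det_matrixPolynomial_has_upper_half_plane_root
    (d k : ℕ) (hd : 1 ≤ d) (hk : 2 ≤ k)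
    (B : Matrix (Fin d) (Fin d) ℂ) (hB : 0 < B.trace.im)
    (Q : Matrix (Fin d) (Fin d) (Polynomial ℂ))
    (hQ : ∀ i j, (Q i j).degree ≤ (k - 2 : ℕ)) :
    ∃ z : ℂ, 0 < z.im ∧
      ((X : Polynomial ℂ) ^ k • (1 : Matrix (Fin d) (Fin d) (Polynomial ℂ))
          - (X : Polynomial ℂ) ^ (k - 1) • B.map Polynomial.C + Q).det.IsRoot z := by
  have cle : ∀ {a b : ℕ}, a ≤ b → ((a : ℕ) : WithBot ℕ) ≤ ((b : ℕ) : WithBot ℕ) :=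
    fun h => Nat.cast_le.mpr h
  have clt : ∀ {a b : ℕ}, a < b → ((a : ℕ) : WithBot ℕ) < ((b : ℕ) : WithBot ℕ) :=
    fun h => Nat.cast_lt.mpr h
  have hdk2 : 2 ≤ d * k := le_trans hk (Nat.le_mul_of_pos_left k hd)
  set M : Matrix (Fin d) (Fin d) (Polynomial ℂ) :=
    (X : Polynomial ℂ) ^ k • (1 : Matrix (Fin d) (Fin d) (Polynomial ℂ))
      - (X : Polynomial ℂ) ^ (k - 1) • B.map Polynomial.C + Q with hM
  have hMij : ∀ i j, M i j =
      (if i = j then X ^ k else 0) - X ^ (k - 1) * C (B i j) + Q i j := by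
    intro i j
    simp [hM, Matrix.smul_apply, Matrix.one_apply, smul_eq_mul, Matrix.map_apply,
      Matrix.sub_apply, Matrix.add_apply, mul_ite, mul_one, mul_zero]
  -- degree bounds on entries
  have hQ' : ∀ i j, (Q i j).degree ≤ (k - 1 : ℕ) := fun i j =>
    (hQ i j).trans (cle (by omega))
  have hoff : ∀ i j, i ≠ j → (M i j).degree ≤ (k - 1 : ℕ) := by
    intro i j hij
    rw [hMij i j, if_neg hij, zero_sub]
    refine (degree_add_le _ _).trans (max_le ?_ (hQ' i j))
    rw [degree_neg]
    calc (X ^ (k-1) * C (B i j)).degree ≤ (X ^ (k-1) : ℂ[X]).degree + (C (B i j)).degree :=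
          degree_mul_le _ _
      _ ≤ (k - 1 : ℕ) + 0 := add_le_add (by rw [degree_X_pow]) degree_C_le
      _ = (k - 1 : ℕ) := add_zero _
  have hdeg : ∀ i j, (M i j).degree ≤ (k : ℕ) := by
    intro i j
    rcases eq_or_ne i j with rfl | hij
    · rw [hMij i i, if_pos rfl]
      refine (degree_add_le _ _).trans (max_le ((degree_sub_le _ _).trans (max_le ?_ ?_)) ?_)
      · rw [degree_X_pow]
      · calc (X ^ (k-1) * C (B i i)).degree ≤ (X ^ (k-1) : ℂ[X]).degree + (C (B i i)).degree :=
              degree_mul_le _ _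
          _ ≤ (k - 1 : ℕ) + 0 := add_le_add (by rw [degree_X_pow]) degree_C_le
          _ ≤ (k : ℕ) := by rw [add_zero]; exact cle (by omega)
      · exact (hQ' i i).trans (cle (by omega))
    · exact (hoff i j hij).trans (cle (by omega))
  -- diagonal entries are monic of degree k with nextCoeff -B i i
  set p : Fin d → ℂ[X] := fun i => M i i with hp
  have hpi : ∀ i, p i = X ^ k + (Q i i - X ^ (k - 1) * C (B i i)) := by
    intro i; rw [hp]; simp only; rw [hMij i i, if_pos rfl]; ring
  have hrest_deg : ∀ i, (Q i i - X ^ (k - 1) * C (B i i)).degree ≤ ((k - 1 : ℕ) : WithBot ℕ) := by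
    intro i
    refine (degree_sub_le _ _).trans (max_le (hQ' i i) ?_)
    calc (X ^ (k-1) * C (B i i)).degree ≤ (X ^ (k-1) : ℂ[X]).degree + (C (B i i)).degree :=
          degree_mul_le _ _
      _ ≤ (k - 1 : ℕ) + 0 := add_le_add (by rw [degree_X_pow]) degree_C_le
      _ = (k - 1 : ℕ) := add_zero _
  have hklt : ((k - 1 : ℕ) : WithBot ℕ) < (k : ℕ) := clt (by omega)
  have hpmonic : ∀ i, (p i).Monic := by
    intro i
    rw [hpi i]
    exact (monic_X_pow k).add_of_left
      (lt_of_le_of_lt (hrest_deg i) (by rw [degree_X_pow]; exact hklt))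
  have hpdeg : ∀ i, (p i).natDegree = k := by
    intro i
    rw [hpi i, natDegree_add_eq_left_of_degree_lt, natDegree_X_pow]
    rw [degree_X_pow]; exact lt_of_le_of_lt (hrest_deg i) hklt
  have hpnext : ∀ i, (p i).nextCoeff = -B i i := by
    intro i
    rw [nextCoeff_of_natDegree_pos (by rw [hpdeg i]; omega), hpdeg i, hpi i]
    rw [coeff_add, coeff_X_pow, if_neg (by omega), coeff_sub,
      coeff_eq_zero_of_degree_lt (lt_of_le_of_lt (hQ i i) (clt (by omega))),
      coeff_mul_C, coeff_X_pow, if_pos rfl, one_mul]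
    ring
  -- the diagonal product D
  set D : ℂ[X] := ∏ i, p i with hD
  have hDmonic : D.Monic := monic_prod_of_monic _ _ fun i _ => hpmonic i
  have hDdeg : D.natDegree = d * k := by
    rw [hD, natDegree_prod _ _ fun i _ => (hpmonic i).ne_zero]
    simp [hpdeg, Finset.sum_const, Finset.card_univ]
  have hDnext : D.nextCoeff = -B.trace := by
    rw [hD, Monic.nextCoeff_prod _ _ fun i _ => hpmonic i]
    simp [hpnext, Matrix.trace, Matrix.diag]
  -- the error term E
  set E : ℂ[X] := ∑ σ ∈ Finset.univ.erase (1 : Equiv.Perm (Fin d)),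
    ((Equiv.Perm.sign σ : ℤ) : ℂ[X]) * ∏ i, M (σ i) i with hE
  have hdetM : M.det = D + E := by
    rw [Matrix.det_apply', ← Finset.add_sum_erase _ _ (Finset.mem_univ (1 : Equiv.Perm (Fin d)))]
    simp [hD, hE, hp]
  have hEdeg : E.degree ≤ ((d * k - 2 : ℕ) : WithBot ℕ) := by
    refine (degree_sum_le _ _).trans (Finset.sup_le ?_)
    intro σ hσ
    have hσ1 : σ ≠ 1 := (Finset.mem_erase.1 hσ).1
    refine (degree_mul_le _ _).trans ?_
    have h1 : (((Equiv.Perm.sign σ : ℤ) : ℂ[X])).degree ≤ 0 := degree_intCast_le _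
    have h2 : (∏ i, M (σ i) i).degree ≤ ((d * k - 2 : ℕ) : WithBot ℕ) := by
      refine (degree_le_natDegree).trans ?_
      have h3 : (∏ i, M (σ i) i).natDegree ≤ d * k - 2 := by
        refine (natDegree_prod_le _ _).trans ?_
        have key : ∑ i, ((M (σ i) i).natDegree + if σ i = i then 0 else 1) ≤ ∑ _i : Fin d, k := by
          refine Finset.sum_le_sum ?_
          intro i _
          rcases eq_or_ne (σ i) i with h | h
          · rw [if_pos h, add_zero]
            exact natDegree_le_iff_degree_le.2 (hdeg _ _)
          · rw [if_neg h]
            have := natDegree_le_iff_degree_le.2 (hoff _ _ h)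
            omega
        rw [Finset.sum_add_distrib] at key
        have hcard : (∑ i, if σ i = i then 0 else 1) = σ.support.card := by
          have heach : ∀ i : Fin d, (if σ i = i then 0 else 1) =
              (if i ∈ σ.support then 1 else 0) := fun i => by
            by_cases h : σ i = i <;> simp [Equiv.Perm.mem_support, h]
          rw [Finset.sum_congr rfl fun i _ => heach i, Finset.sum_ite_mem,
            Finset.univ_inter, Finset.sum_const, smul_eq_mul, mul_one]
        have hsupp : 2 ≤ σ.support.card := Equiv.Perm.one_lt_card_support_of_ne_one hσ1
        have hconst : (∑ _i : Fin d, k) = d * k := by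
          simp [Finset.sum_const, Finset.card_univ, mul_comm]
        omega
      exact Nat.cast_le.mpr h3
    calc _ ≤ (0 : WithBot ℕ) + ((d * k - 2 : ℕ) : WithBot ℕ) := add_le_add h1 h2
      _ = ((d * k - 2 : ℕ) : WithBot ℕ) := zero_add _
  have hElt : E.degree < D.degree := by
    rw [degree_eq_natDegree hDmonic.ne_zero, hDdeg]
    exact lt_of_le_of_lt hEdeg (clt (by omega))
  have hPmonic : M.det.Monic := by rw [hdetM]; exact hDmonic.add_of_left hElt
  have hPdeg : M.det.natDegree = d * k := by
    rw [hdetM, natDegree_add_eq_left_of_degree_lt hElt, hDdeg]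
  have hPnext : M.det.nextCoeff = -B.trace := by
    rw [nextCoeff_of_natDegree_pos (by omega), hPdeg, hdetM, coeff_add,
      coeff_eq_zero_of_degree_lt (lt_of_le_of_lt hEdeg (clt (by omega))), add_zero,
      ← hDdeg, ← nextCoeff_of_natDegree_pos (by rw [hDdeg]; omega), hDnext]
  -- Vieta
  have hsum : M.det.roots.sum = B.trace := by
    have h := Splits.nextCoeff_eq_neg_sum_roots_of_monic
      (IsAlgClosed.splits M.det) hPmonic
    rw [hPnext] at h
    exact (neg_inj.mp h).symm
  have him : (M.det.roots.map Complex.im).sum = B.trace.im := by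
    rw [← hsum]
    exact (map_multiset_sum Complex.imAddGroupHom M.det.roots).symm
  -- extract a root with positive imaginary part
  by_contra hcon
  push_neg at hcon
  have hle : ∀ x ∈ M.det.roots.map Complex.im, -x ≥ 0 := by
    intro x hx
    obtain ⟨z, hz, rfl⟩ := Multiset.mem_map.1 hx
    have hzr : M.det.IsRoot z := isRoot_of_mem_roots hz
    by_contra hgt
    exact absurd hzr (by simpa using hcon z (by simp at hgt; linarith))
  have hneg : 0 ≤ ((M.det.roots.map Complex.im).map Neg.neg).sum :=
    Multiset.sum_nonneg (by
      intro x hx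
      obtain ⟨y, hy, rfl⟩ := Multiset.mem_map.1 hx
      exact hle y hy)
  rw [Multiset.sum_map_neg'] at hneg
  rw [him] at hneg
  linarith
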